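/- arXiv:2304.06781 — 2 statements merged into one kernel-verified Lean document; each statement's English description precedes it below -/
import Mathlib

section
/- The two 2-dimensional complex BiHom-associative trialgebras BTas₂¹ (with products e₁⊣e₂ = e₂⊣e₁ = e₂⊣e₂ = e₁, e₁⊢e₂ = e₂⊢e₁ = e₁, e₂⊥e₂ = e₁, α(e₂) = β(e₂) = e₁) and BTas₂⁵ (with products e₁⊣e₂ = e₁, e₂⊣e₂ = e₂, e₁⊢e₂ = e₁, e₂⊢e₂ = e₂, e₁⊥e₂ = e₁, e₂⊥e₂ = e₂, α(e₁) = β(e₁) = e₁, α(e₂) = e₂, β(e₂) = e₁+e₂) are not isomorphic as BiHom-associative trialgebras. -/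
noncomputable section

/-- BTas₂¹: e₁⊣e₂ = e₂⊣e₁ = e₂⊣e₂ = e₁; e₁⊢e₂ = e₂⊢e₁ = e₁; e₂⊥e₂ = e₁;
α(e₂) = β(e₂) = e₁, zero elsewhere. -/
def l1 : (Fin 2 → ℂ) → (Fin 2 → ℂ) → (Fin 2 → ℂ) :=
  fun x y => Pi.single 0 (x 0 * y 1 + x 1 * y 0 + x 1 * y 1)
def r1 : (Fin 2 → ℂ) → (Fin 2 → ℂ) → (Fin 2 → ℂ) :=
  fun x y => Pi.single 0 (x 0 * y 1 + x 1 * y 0)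
def m1 : (Fin 2 → ℂ) → (Fin 2 → ℂ) → (Fin 2 → ℂ) :=
  fun x y => Pi.single 0 (x 1 * y 1)
def al1 : (Fin 2 → ℂ) → (Fin 2 → ℂ) := fun x => Pi.single 0 (x 1)
def be1 : (Fin 2 → ℂ) → (Fin 2 → ℂ) := fun x => Pi.single 0 (x 1)

/-- BTas₂⁵: e₁•e₂ = e₁, e₂•e₂ = e₂ for all three products;
α(e₁) = β(e₁) = e₁, α(e₂) = e₂, β(e₂) = e₁ + e₂. -/
def l5 : (Fin 2 → ℂ) → (Fin 2 → ℂ) → (Fin 2 → ℂ) :=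
  fun x y => Pi.single 0 (x 0 * y 1) + Pi.single 1 (x 1 * y 1)
def r5 : (Fin 2 → ℂ) → (Fin 2 → ℂ) → (Fin 2 → ℂ) :=
  fun x y => Pi.single 0 (x 0 * y 1) + Pi.single 1 (x 1 * y 1)
def m5 : (Fin 2 → ℂ) → (Fin 2 → ℂ) → (Fin 2 → ℂ) :=
  fun x y => Pi.single 0 (x 0 * y 1) + Pi.single 1 (x 1 * y 1)
def al5 : (Fin 2 → ℂ) → (Fin 2 → ℂ) := fun x => x
def be5 : (Fin 2 → ℂ) → (Fin 2 → ℂ) := fun x => ![x 0 + x 1, x 1]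

theorem stmt16 :
    ¬ ∃ ψ : (Fin 2 → ℂ) ≃ₗ[ℂ] (Fin 2 → ℂ),
      (∀ x, ψ (al1 x) = al5 (ψ x)) ∧ (∀ x, ψ (be1 x) = be5 (ψ x)) ∧
      (∀ x y, ψ (l1 x y) = l5 (ψ x) (ψ y)) ∧
      (∀ x y, ψ (r1 x y) = r5 (ψ x) (ψ y)) ∧
      (∀ x y, ψ (m1 x y) = m5 (ψ x) (ψ y)) := by
  rintro ⟨ψ, hα, -, -, -, -⟩
  have h := hα (Pi.single 0 1)
  have h1 : al1 (Pi.single (0 : Fin 2) (1:ℂ)) = 0 := by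
    simp [al1, Pi.single_eq_of_ne]
  rw [h1, map_zero] at h
  have h2 : ψ (Pi.single 0 1) = 0 := h.symm
  have h3 : (Pi.single (0:Fin 2) (1:ℂ)) = 0 := ψ.injective (by simp [h2])
  have := congrFun h3 0
  simp at this
end
end

section
/- Consider the 3-dimensional complex BiHom-associative trialgebra BTas₃³ with products e₂⊣e₃ = e₁, e₃⊣e₁ = e₁, e₃⊣e₂ = e₁; e₁⊢e₂ = e₁, e₂⊢e₃ = e₁, e₃⊢e₂ = e₁; e₁⊥e₁ = e₁, e₁⊥e₂ = e₁, e₂⊥e₃ = e₁, e₃⊥e₁ = e₁ (other basis products zero), with α(e₂) = e₂, β(e₃) = e₃ (zero on remaining basis vectors). Then the space of its αβ-derivations is 2-dimensional, spanned by the diagonal maps d₁(e₂) = e₂ and d₂(e₃) = e₃ (each zero on the other basis vectors). -/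
noncomputable section

/-- The algebra BTas₃³ on ℂ³: products into e₁, with
e₂⊣e₃ = e₃⊣e₁ = e₃⊣e₂ = e₁; e₁⊢e₂ = e₂⊢e₃ = e₃⊢e₂ = e₁;
e₁⊥e₁ = e₁⊥e₂ = e₂⊥e₃ = e₃⊥e₁ = e₁; α(e₂) = e₂, β(e₃) = e₃, zero elsewhere. -/
def l19 : (Fin 3 → ℂ) → (Fin 3 → ℂ) → (Fin 3 → ℂ) :=
  fun x y => Pi.single 0 (x 1 * y 2 + x 2 * y 0 + x 2 * y 1)
def r19 : (Fin 3 → ℂ) → (Fin 3 → ℂ) → (Fin 3 → ℂ) :=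
  fun x y => Pi.single 0 (x 0 * y 1 + x 1 * y 2 + x 2 * y 1)
def m19 : (Fin 3 → ℂ) → (Fin 3 → ℂ) → (Fin 3 → ℂ) :=
  fun x y => Pi.single 0 (x 0 * y 0 + x 0 * y 1 + x 1 * y 2 + x 2 * y 0)
def al19 : (Fin 3 → ℂ) → (Fin 3 → ℂ) := fun x => Pi.single 1 (x 1)
def be19 : (Fin 3 → ℂ) → (Fin 3 → ℂ) := fun x => Pi.single 2 (x 2)

/-- d₁ : e₂ ↦ e₂, zero elsewhere. -/
def D19a : (Fin 3 → ℂ) →ₗ[ℂ] (Fin 3 → ℂ) :=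
  (LinearMap.single ℂ (fun _ : Fin 3 => ℂ) 1).comp (LinearMap.proj 1)
/-- d₂ : e₃ ↦ e₃, zero elsewhere. -/
def D19b : (Fin 3 → ℂ) →ₗ[ℂ] (Fin 3 → ℂ) :=
  (LinearMap.single ℂ (fun _ : Fin 3 => ℂ) 2).comp (LinearMap.proj 2)

lemma ab0 (y : Fin 3 → ℂ) : al19 (be19 y) = 0 := by
  simp [al19, be19]


theorem stmt19 :
    (∀ d : (Fin 3 → ℂ) →ₗ[ℂ] (Fin 3 → ℂ),
      ((∀ x, d (al19 x) = al19 (d x)) ∧ (∀ x, d (be19 x) = be19 (d x)) ∧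
       (∀ x y, d (l19 x y) = l19 (d x) (al19 (be19 y)) + l19 (al19 (be19 x)) (d y)) ∧
       (∀ x y, d (r19 x y) = r19 (d x) (al19 (be19 y)) + r19 (al19 (be19 x)) (d y)) ∧
       (∀ x y, d (m19 x y) = m19 (d x) (al19 (be19 y)) + m19 (al19 (be19 x)) (d y)))
      ↔ ∃ a b : ℂ, d = a • D19a + b • D19b) ∧
    LinearIndependent ℂ ![D19a, D19b] := by
  constructor
  · intro d
    constructor
    · rintro ⟨ha, hb, -, -, hm⟩
      have h0 : d (Pi.single 0 1) = 0 := by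
        have := hm (Pi.single 0 1) (Pi.single 0 1)
        simpa [m19, ab0] using this
      obtain ⟨a, h1⟩ : ∃ a, d (Pi.single 1 1) = Pi.single 1 a :=
        ⟨_, by simpa [al19] using ha (Pi.single 1 1)⟩
      obtain ⟨b, h2⟩ : ∃ b, d (Pi.single 2 1) = Pi.single 2 b :=
        ⟨_, by simpa [be19] using hb (Pi.single 2 1)⟩
      refine ⟨a, b, ?_⟩
      have hx : ∀ x : Fin 3 → ℂ,
          x = x 0 • (Pi.single 0 1 : Fin 3 → ℂ) + x 1 • (Pi.single 1 1 : Fin 3 → ℂ) + x 2 • (Pi.single 2 1 : Fin 3 → ℂ) := by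
        intro x; ext j; fin_cases j <;> simp [Pi.single_apply]
      apply LinearMap.ext; intro x
      conv_lhs => rw [hx x]
      simp only [map_add, map_smul, h0, h1, h2, smul_zero, zero_add]
      ext j
      fin_cases j <;> simp [D19a, D19b, Pi.single_apply, mul_comm]
    · rintro ⟨a, b, rfl⟩
      refine ⟨?_, ?_, ?_, ?_, ?_⟩ <;> intro x <;>
        simp [D19a, D19b, al19, be19, l19, r19, m19, ab0, Pi.single_apply] <;>
        · ext j; simp [Pi.single_apply]
  · rw [LinearIndependent.pair_iff]
    intro s t h
    have h2 := congrFun (LinearMap.congr_fun h (Pi.single 1 1)) 1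
    have h3 := congrFun (LinearMap.congr_fun h (Pi.single 2 1)) 2
    simp [D19a, D19b] at h2 h3
    exact ⟨h2, h3⟩
end
end
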